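/- Let g and g₀ be nilpotent finite-dimensional real Lie algebras of the same dimension n, each having a 1-dimensional center. If rank(ad*_{g₀}) = n − 1 (i.e., the corresponding simply connected nilpotent Lie group G₀ has square-integrable representations modulo the center) and g ⇝ g₀, then rank(ad*_{g}) = n − 1. -/

import Mathlib

open Filter Topology

/-- `bg₀` (a bracket on `W`) is a contraction of `bg` (a bracket on `V`). -/
def IsContractionOf {V W : Type*} [AddCommGroup V] [Module ℝ V]
    [AddCommGroup W] [Module ℝ W] [TopologicalSpace W]
    (bg : V → V → V) (bg₀ : W → W → W) : Prop :=
  ∃ I : Set ℝ, (𝓝[I \ {0}] (0 : ℝ)).NeBot ∧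
    ∃ C : ℝ → (W ≃ₗ[ℝ] V), ∀ x y : W,
      Tendsto (fun r => (C r).symm (bg (C r x) (C r y))) (𝓝[I \ {0}] (0 : ℝ)) (𝓝 (bg₀ x y))

/-- For `ξ ∈ g*`, the bilinear form `B^g_ξ (x, y) = ξ ⁅x, y⁆`. -/
noncomputable def coadjointForm {g : Type*} [LieRing g] [LieAlgebra ℝ g]
    (ξ : Module.Dual ℝ g) : g →ₗ[ℝ] g →ₗ[ℝ] ℝ :=
  LinearMap.mk₂ ℝ (fun x y => ξ ⁅x, y⁆)
    (fun x x' y => by simp only [add_lie, map_add])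
    (fun c x y => by simp only [smul_lie, map_smul])
    (fun x y y' => by simp only [lie_add, map_add])
    (fun c x y => by simp only [lie_smul, map_smul])

/-- `rank (ad*_g) = max { rank B^g_ξ : ξ ∈ g* }`. -/
noncomputable def coadjointRank (g : Type*) [LieRing g] [LieAlgebra ℝ g] : ℕ :=
  ⨆ ξ : Module.Dual ℝ g, Module.finrank ℝ (LinearMap.range (coadjointForm ξ))

section auxLemmas

open Module LinearMap

variable {V : Type*} [AddCommGroup V] [Module ℝ V] [FiniteDimensional ℝ V]

/-- Given linearly independent functionals, there is a "dual" family of vectors. -/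
lemma exists_dual_pairing {k : ℕ} (f : Fin k → Module.Dual ℝ V)
    (hf : LinearIndependent ℝ f) :
    ∃ y : Fin k → V, ∀ i j, f i (y j) = if i = j then 1 else 0 := by
  have hsurj : Function.Surjective (LinearMap.pi f) := by
    rw [← LinearMap.range_eq_top]
    by_contra hne
    obtain ⟨φ, hφ0, hφ⟩ := (LinearMap.range (LinearMap.pi f)).exists_le_ker_of_lt_top
      (lt_top_iff_ne_top.mpr hne)
    set c : Fin k → ℝ := fun i => φ (fun j => if i = j then 1 else 0) with hcdef
    have key : ∀ v : Fin k → ℝ, φ v = ∑ i, v i * c i := by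
      intro v
      conv_lhs => rw [pi_eq_sum_univ v, map_sum]
      simp [hcdef, smul_eq_mul]
    have hz : (∑ i, c i • f i) = 0 := by
      ext w
      have h0 : φ (LinearMap.pi f w) = 0 := hφ ⟨w, rfl⟩
      rw [key] at h0
      simpa [LinearMap.pi_apply, mul_comm] using h0
    have hc : ∀ i, c i = 0 := Fintype.linearIndependent_iff.mp hf c hz
    apply hφ0
    ext v
    simp [key, hc]
  choose y hy using fun j => hsurj (Pi.single j (1 : ℝ))
  refine ⟨y, fun i j => ?_⟩
  have := congrFun (hy j) i
  rw [LinearMap.pi_apply] at this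
  rw [this, Pi.single_apply]

/-- If some `k × k` "minor" of a bilinear-type map is invertible, its rank is at least `k`. -/
lemma le_finrank_range_of_det_ne {k : ℕ} (L : V →ₗ[ℝ] Module.Dual ℝ V)
    (u v : Fin k → V)
    (hdet : (Matrix.of fun i j => L (u i) (v j)).det ≠ 0) :
    k ≤ finrank ℝ (LinearMap.range L) := by
  set M : Matrix (Fin k) (Fin k) ℝ := Matrix.of fun i j => L (u i) (v j) with hMdef
  have hind : LinearIndependent ℝ (fun i => L (u i)) := by
    rw [Fintype.linearIndependent_iff]
    intro c hc
    have hcM : Matrix.vecMul c M = 0 := by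
      ext j
      have := congrArg (fun φ : Module.Dual ℝ V => φ (v j)) hc
      simpa [Matrix.vecMul, dotProduct, hMdef] using this
    have hM : IsUnit M.det := isUnit_iff_ne_zero.mpr hdet
    have hc0 : c = 0 := by
      have := congrArg (fun w => Matrix.vecMul w M⁻¹) hcM
      simpa [Matrix.vecMul_vecMul, Matrix.mul_nonsing_inv M hM] using this
    intro i; rw [hc0]; rfl
  have hle : Submodule.span ℝ (Set.range fun i => L (u i)) ≤ LinearMap.range L := by
    rw [Submodule.span_le]; rintro _ ⟨i, rfl⟩; exact ⟨u i, rfl⟩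
  calc k = Fintype.card (Fin k) := (Fintype.card_fin k).symm
    _ = finrank ℝ (Submodule.span ℝ (Set.range fun i => L (u i))) :=
        (finrank_span_eq_card hind).symm
    _ ≤ finrank ℝ (LinearMap.range L) := Submodule.finrank_mono hle

/-- If the center is 1-dimensional, every coadjoint form has rank at most `dim - 1`. -/
lemma coadjoint_rank_le' {g : Type*} [LieRing g] [LieAlgebra ℝ g] [FiniteDimensional ℝ g]
    (hc : Module.finrank ℝ (LieAlgebra.center ℝ g) = 1) (ξ : Module.Dual ℝ g) :
    finrank ℝ (LinearMap.range (coadjointForm ξ)) ≤ finrank ℝ g - 1 := by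
  have hker : ((LieAlgebra.center ℝ g : LieSubmodule ℝ g g) : Submodule ℝ g)
      ≤ LinearMap.ker (coadjointForm ξ) := by
    intro x hx
    rw [LinearMap.mem_ker]
    ext y
    have hxy : ⁅y, x⁆ = (0 : g) := (LieModule.mem_maxTrivSubmodule ℝ g g x).mp hx y
    have : ⁅x, y⁆ = (0 : g) := by rw [← lie_skew, hxy, neg_zero]
    simp [coadjointForm, this]
  have h1 : 1 ≤ finrank ℝ (LinearMap.ker (coadjointForm ξ)) := by
    have := Submodule.finrank_mono (t := LinearMap.ker (coadjointForm ξ)) hker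
    exact le_trans (le_of_eq hc.symm) this
  have h2 := LinearMap.finrank_range_add_finrank_ker (coadjointForm ξ)
  omega

end auxLemmas

set_option maxHeartbeats 4000000 in
/-- Let `g` and `g₀` be nilpotent finite-dimensional real Lie algebras of the same dimension
`n`, each with 1-dimensional center.  If `rank (ad*_{g₀}) = n - 1` (square-integrable
representations modulo the center) and `g ⇝ g₀`, then `rank (ad*_g) = n - 1`. -/
theorem coadjointRank_eq_of_isContractionOf_of_squareIntegrable {g g₀ : Type*}
    [LieRing g] [LieAlgebra ℝ g] [FiniteDimensional ℝ g] [LieRing.IsNilpotent g]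
    [LieRing g₀] [LieAlgebra ℝ g₀] [FiniteDimensional ℝ g₀] [LieRing.IsNilpotent g₀]
    [TopologicalSpace g₀] [IsTopologicalAddGroup g₀] [ContinuousSMul ℝ g₀] [T2Space g₀]
    (n : ℕ) (hdim : Module.finrank ℝ g = n) (hdim₀ : Module.finrank ℝ g₀ = n)
    (hcenter : Module.finrank ℝ (LieAlgebra.center ℝ g) = 1)
    (hcenter₀ : Module.finrank ℝ (LieAlgebra.center ℝ g₀) = 1)
    (hrank₀ : coadjointRank g₀ = n - 1)
    (h : IsContractionOf (fun x y : g => ⁅x, y⁆) (fun x y : g₀ => ⁅x, y⁆)) :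
    coadjointRank g = n - 1 := by
  classical
  obtain ⟨I, hI, C, hC⟩ := h
  have hbound₀ : ∀ ξ : Module.Dual ℝ g₀,
      Module.finrank ℝ (LinearMap.range (coadjointForm ξ)) ≤ n - 1 := fun ξ =>
    hdim₀ ▸ coadjoint_rank_le' hcenter₀ ξ
  have hbound : ∀ ξ : Module.Dual ℝ g,
      Module.finrank ℝ (LinearMap.range (coadjointForm ξ)) ≤ n - 1 := fun ξ =>
    hdim ▸ coadjoint_rank_le' hcenter ξ
  -- extract a functional of maximal rank on g₀
  obtain ⟨ξ₀, hξ₀⟩ : ∃ ξ₀ : Module.Dual ℝ g₀,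
      Module.finrank ℝ (LinearMap.range (coadjointForm ξ₀)) = n - 1 := by
    have hne : (Set.range fun ξ : Module.Dual ℝ g₀ =>
        Module.finrank ℝ (LinearMap.range (coadjointForm ξ))).Nonempty := ⟨_, ⟨0, rfl⟩⟩
    have hbdd : BddAbove (Set.range fun ξ : Module.Dual ℝ g₀ =>
        Module.finrank ℝ (LinearMap.range (coadjointForm ξ))) :=
      ⟨n - 1, by rintro _ ⟨ξ, rfl⟩; exact hbound₀ ξ⟩
    have hmem := Nat.sSup_mem hne hbdd
    have : coadjointRank g₀ ∈ Set.range fun ξ : Module.Dual ℝ g₀ =>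
        Module.finrank ℝ (LinearMap.range (coadjointForm ξ)) := hmem
    rw [hrank₀] at this
    obtain ⟨ξ₀, hξ₀⟩ := this
    exact ⟨ξ₀, hξ₀⟩
  set k := n - 1 with hkdef
  -- choose a family whose images form a basis of the range
  obtain ⟨x, hx⟩ : ∃ x : Fin k → g₀,
      LinearIndependent ℝ (fun i => coadjointForm ξ₀ (x i)) := by
    haveI : Module.Free ℝ (LinearMap.range (coadjointForm ξ₀)) := Module.Free.of_divisionRing ℝ (LinearMap.range (coadjointForm ξ₀))
    let b := Module.finBasisOfFinrankEq ℝ (LinearMap.range (coadjointForm ξ₀)) hξ₀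
    choose x hx using fun i => (b i).2
    refine ⟨x, ?_⟩
    have heq : (fun i => coadjointForm ξ₀ (x i)) =
        fun i => ((b i : Module.Dual ℝ g₀)) := funext hx
    rw [heq]
    exact b.linearIndependent.map' (Submodule.subtype _) (Submodule.ker_subtype _)
  obtain ⟨y, hy⟩ := exists_dual_pairing _ hx
  -- the matrices converge to the identity matrix
  set Lf := 𝓝[I \ {0}] (0 : ℝ) with hLf
  have hcont : Continuous ξ₀ := ξ₀.continuous_of_finiteDimensional
  have hM : Tendsto (fun r => Matrix.of fun i j => ξ₀ ((C r).symm ⁅C r (x i), C r (y j)⁆))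
      Lf (𝓝 (1 : Matrix (Fin k) (Fin k) ℝ)) := by
    refine tendsto_pi_nhds.mpr ?_
    intro i
    rw [tendsto_pi_nhds]
    intro j
    have h1 : Tendsto (fun r => (C r).symm ⁅C r (x i), C r (y j)⁆) Lf (𝓝 ⁅x i, y j⁆) :=
      hC (x i) (y j)
    have h2 := (hcont.tendsto _).comp h1
    have h3 : ξ₀ ⁅x i, y j⁆ = (1 : Matrix (Fin k) (Fin k) ℝ) i j := by
      rw [Matrix.one_apply]
      simpa [coadjointForm] using hy i j
    rw [← h3]
    exact h2
  have hdet : Tendsto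
      (fun r => (Matrix.of fun i j => ξ₀ ((C r).symm ⁅C r (x i), C r (y j)⁆)).det)
      Lf (𝓝 (1 : ℝ)) := by
    have hcdet : Continuous fun A : Matrix (Fin k) (Fin k) ℝ => A.det :=
      continuous_id.matrix_det
    have := (hcdet.tendsto _).comp hM
    rw [Matrix.det_one] at this
    exact this
  have hev : ∀ᶠ r in Lf, (Matrix.of fun i j =>
      ξ₀ ((C r).symm ⁅C r (x i), C r (y j)⁆)).det ≠ 0 :=
    hdet.eventually_ne one_ne_zero
  obtain ⟨r, hr⟩ := hev.exists
  -- pull the functional back to g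
  set η : Module.Dual ℝ g := ξ₀.comp ((C r).symm : g →ₗ[ℝ] g₀) with hηdef
  have hmat : (Matrix.of fun i j => coadjointForm η (C r (x i)) (C r (y j))) =
      Matrix.of fun i j => ξ₀ ((C r).symm ⁅C r (x i), C r (y j)⁆) := by
    ext i j
    simp [coadjointForm, hηdef]
  have hk : k ≤ Module.finrank ℝ (LinearMap.range (coadjointForm η)) := by
    apply le_finrank_range_of_det_ne (coadjointForm η)
      (fun i => C r (x i)) (fun j => C r (y j))
    rw [hmat]
    exact hr
  -- conclude
  refine le_antisymm (ciSup_le hbound) ?_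
  calc n - 1 = k := rfl
    _ ≤ Module.finrank ℝ (LinearMap.range (coadjointForm η)) := hk
    _ ≤ coadjointRank g :=
        le_ciSup ⟨n - 1, by rintro _ ⟨ξ, rfl⟩; exact hbound ξ⟩ η
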